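/- arXiv:1509.02955 — 2 statements merged into one kernel-verified Lean document; each statement's English description precedes it below -/
import Mathlib

section
/- Consider n ≥ 2 nodes each with action space {α, β} and historyless self-independent reaction functions f_i(a) = α if a_{-i} = α^{n-1} and f_i(a) = β otherwise. If in some state at least two nodes have action β, then every fair trajectory from that state converges to the state β^n. -/
/-- One step of historyless dynamics. -/
def step {n : ℕ} (f : Fin n → (Fin n → Bool) → Bool) (s : Finset (Fin n))
    (a : Fin n → Bool) : Fin n → Bool :=
  fun i => if i ∈ s then f i a else a i

/-- The `(a0, σ)`-trajectory. -/
def traj {n : ℕ} (f : Fin n → (Fin n → Bool) → Bool) (σ : ℕ → Finset (Fin n))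
    (a0 : Fin n → Bool) : ℕ → Fin n → Bool
  | 0 => a0
  | t + 1 => step f (σ (t + 1)) (traj f σ a0 t)

/-- A schedule is fair if it activates every node infinitely often. -/
def Fair {n : ℕ} (σ : ℕ → Finset (Fin n)) : Prop :=
  ∀ i : Fin n, ∀ T : ℕ, ∃ t ≥ T, i ∈ σ t

/-- Convergence: eventually constantly `b`. -/
def Converges {n : ℕ} (x : ℕ → Fin n → Bool) (b : Fin n → Bool) : Prop :=
  ∃ T : ℕ, ∀ t > T, x t = b

/-- `n ≥ 2` nodes with actions `{α, β}` (encoded `α := true`, `β := false`) and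
self-independent historyless reaction functions `f i a = α` if `a_{-i} = α^{n-1}` and
`β` otherwise.  If in some state at least two nodes have action `β`, then every fair
trajectory from that state converges to `β^n`. -/
theorem stmt7 (n : ℕ) (hn : 2 ≤ n)
    (f : Fin n → (Fin n → Bool) → Bool)
    (hf : ∀ (i : Fin n) (a : Fin n → Bool),
      f i a = if ∀ j, j ≠ i → a j = true then true else false)
    (a : Fin n → Bool) (i j : Fin n) (hij : i ≠ j)
    (hi : a i = false) (hj : a j = false)
    (σ : ℕ → Finset (Fin n)) (hσ : Fair σ) :
    Converges (traj f σ a) (fun _ => false) := by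
  have key : ∀ t, traj f σ a t i = false ∧ traj f σ a t j = false := by
    intro t
    induction t with
    | zero => exact ⟨hi, hj⟩
    | succ t ih =>
      have hni : ¬ ∀ k, k ≠ i → traj f σ a t k = true := fun h => by
        have := h j (Ne.symm hij); rw [ih.2] at this; exact Bool.false_ne_true this
      have hnj : ¬ ∀ k, k ≠ j → traj f σ a t k = true := fun h => by
        have := h i hij; rw [ih.1] at this; exact Bool.false_ne_true this
      constructor
      · show step f (σ (t+1)) (traj f σ a t) i = false
        unfold step
        split
        · rw [hf, if_neg hni]
        · exact ih.1
      · show step f (σ (t+1)) (traj f σ a t) j = false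
        unfold step
        split
        · rw [hf, if_neg hnj]
        · exact ih.2
  have hno : ∀ t (k : Fin n), ¬ ∀ m, m ≠ k → traj f σ a t m = true := by
    intro t k h
    by_cases hki : k = i
    · have := h j (by rw [hki]; exact Ne.symm hij)
      rw [(key t).2] at this; exact Bool.false_ne_true this
    · have := h i (fun e => hki e.symm)
      rw [(key t).1] at this; exact Bool.false_ne_true this
  have act : ∀ t (k : Fin n), k ∈ σ (t+1) → traj f σ a (t+1) k = false := by
    intro t k hk
    show step f (σ (t+1)) (traj f σ a t) k = false
    unfold step
    rw [if_pos hk, hf, if_neg (hno t k)]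
  have mono : ∀ t (k : Fin n), traj f σ a t k = false → traj f σ a (t+1) k = false := by
    intro t k hk
    show step f (σ (t+1)) (traj f σ a t) k = false
    unfold step
    split
    · rw [hf, if_neg (hno t k)]
    · exact hk
  have mono' : ∀ (k : Fin n) (s t : ℕ), s ≤ t → traj f σ a s k = false →
      traj f σ a t k = false := by
    intro k s t hst hs
    induction t with
    | zero => have : s = 0 := Nat.le_zero.mp hst; rwa [this] at hs
    | succ t ih =>
      rcases Nat.lt_or_ge s (t+1) with h | h
      · exact mono t k (ih (Nat.lt_succ_iff.mp h))
      · have : s = t + 1 := le_antisymm hst h; rwa [this] at hs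
  choose τ hτ hτσ using fun k : Fin n => hσ k 1
  obtain ⟨T, hT⟩ : ∃ T, ∀ k : Fin n, τ k ≤ T := by
    rcases (Finset.univ.image τ).exists_le with ⟨T, hT⟩
    exact ⟨T, fun k => hT _ (Finset.mem_image_of_mem τ (Finset.mem_univ k))⟩
  refine ⟨T, fun t ht => funext fun k => ?_⟩
  have h1 : traj f σ a (τ k) k = false := by
    obtain ⟨m, hm⟩ : ∃ m, τ k = m + 1 := ⟨τ k - 1, by have := hτ k; omega⟩
    rw [hm]; exact act m k (hm ▸ hτσ k)
  exact mono' k (τ k) t (le_trans (hT k) (le_of_lt ht)) h1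
end

section
/- Let k_1,...,k_n ≥ 4. In the 2-recall protocol where a history (a,b) ∈ A² is a 'move-on' history if a ≠ b and a_j − b_j mod k_j ∈ {0,1} for all j, a 'query' history if b_j − a_j mod k_j ∈ {0,1,2} for all j, and a 'repeat' history otherwise, the move-on and query conditions are mutually exclusive, every move-on or repeat history is followed by a query history, and a query history (a,b) is followed by a repeat history only if b is a fixed point of the query response (i.e., every node is best-responding at b). -/
open scoped Classical

variable {n : ℕ}

/-- `α` is a best response of node `i` at state `b`. -/
def IsBR {k : Fin n → ℕ} (u : ∀ i : Fin n, (∀ j, Fin (k j)) → ℝ)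
    (i : Fin n) (α : Fin (k i)) (b : ∀ j, Fin (k j)) : Prop :=
  ∀ β : Fin (k i), u i (Function.update b i β) ≤ u i (Function.update b i α)

/-- A 'move-on' history: `a ≠ b` and `a j − b j (mod k j) ∈ {0,1}` for all `j`. -/
def MoveOn (k : Fin n → ℕ) (a b : ∀ j, Fin (k j)) : Prop :=
  a ≠ b ∧ ∀ j : Fin n,
    ((a j : ℕ) + k j - (b j : ℕ)) % k j = 0 ∨ ((a j : ℕ) + k j - (b j : ℕ)) % k j = 1

/-- A 'query' history: `b j − a j (mod k j) ∈ {0,1,2}` for all `j`. -/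
def Query (k : Fin n → ℕ) (a b : ∀ j, Fin (k j)) : Prop :=
  ∀ j : Fin n,
    ((b j : ℕ) + k j - (a j : ℕ)) % k j = 0 ∨
    ((b j : ℕ) + k j - (a j : ℕ)) % k j = 1 ∨
    ((b j : ℕ) + k j - (a j : ℕ)) % k j = 2

private lemma md {k x y : ℕ} (hx : x < k) (hy : y < k) :
    (x + k - y) % k = if y ≤ x then x - y else x + k - y := by
  rcases le_or_gt y x with h | h
  · rw [if_pos h]
    have hxy : x + k - y = (x - y) + k := by omega
    rw [hxy, Nat.add_mod_right, Nat.mod_eq_of_lt (by omega)]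
  · rw [if_neg (not_le.mpr h)]
    exact Nat.mod_eq_of_lt (by omega)

/-- With `k j ≥ 4` for all `j`: in the 2-recall protocol where at a move-on history
`(a,b)` each node plays `π a i` (`π` the lexicographic successor), at a query history
node `i` plays `b i` if `b i` is a best response at `b` and `b i − 1 (mod k i)`
otherwise, and at a repeat history (neither move-on nor query) each node repeats
`b i`: the move-on and query conditions are mutually exclusive, every move-on or
repeat history is followed by a query history, and a query history `(a,b)` is followed
by a repeat history only if every node is best-responding at `b`. -/
theorem stmt13 (n : ℕ) (k : Fin n → ℕ) [∀ i, NeZero (k i)] (hk : ∀ i, 4 ≤ k i)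
    (u : ∀ i : Fin n, (∀ j, Fin (k j)) → ℝ)
    (π : (∀ j, Fin (k j)) → ∀ j, Fin (k j))
    (hπlex : ∀ (a : ∀ j, Fin (k j)) (i : Fin n),
      π a i = if ∀ j, i < j → (a j : ℕ) = k j - 1 then a i + 1 else a i)
    (hπ : ∀ (a : ∀ j, Fin (k j)) (i : Fin n),
      ((π a i : ℕ) + k i - (a i : ℕ)) % k i = 0 ∨
      ((π a i : ℕ) + k i - (a i : ℕ)) % k i = 1)
    (f : (∀ j, Fin (k j)) → (∀ j, Fin (k j)) → ∀ j, Fin (k j))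
    (hfM : ∀ a b : ∀ j, Fin (k j), MoveOn k a b → f a b = π a)
    (hfQ : ∀ a b : ∀ j, Fin (k j), Query k a b → ∀ i : Fin n,
      f a b i = if IsBR u i (b i) b then b i else b i - 1)
    (hfR : ∀ a b : ∀ j, Fin (k j), ¬ MoveOn k a b → ¬ Query k a b → f a b = b) :
    (∀ a b : ∀ j, Fin (k j), ¬ (MoveOn k a b ∧ Query k a b)) ∧
    (∀ a b : ∀ j, Fin (k j),
      (MoveOn k a b ∨ (¬ MoveOn k a b ∧ ¬ Query k a b)) → Query k b (f a b)) ∧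
    (∀ a b : ∀ j, Fin (k j), Query k a b →
      ¬ MoveOn k b (f a b) → ¬ Query k b (f a b) → ∀ i : Fin n, IsBR u i (b i) b) := by
  have hsub : ∀ (i : Fin n) (c : Fin (k i)),
      ((c - 1 : Fin (k i)) : ℕ) = if 1 ≤ (c : ℕ) then (c : ℕ) - 1 else k i - 1 := by
    intro i c
    have h4 := hk i
    have hc := c.is_lt
    rw [Fin.sub_def]
    simp only [Fin.val_one']
    have h1 : 1 % k i = 1 := Nat.mod_eq_of_lt (by omega)
    rw [h1]
    rcases Nat.lt_or_ge 0 (c : ℕ) with h | h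
    · rw [if_pos (by omega)]
      have hh : k i - 1 + (c : ℕ) = ((c : ℕ) - 1) + k i := by omega
      rw [hh, Nat.add_mod_right, Nat.mod_eq_of_lt (by omega)]
    · rw [if_neg (by omega)]
      have hc0 : (c : ℕ) = 0 := by omega
      rw [hc0, Nat.add_zero, Nat.mod_eq_of_lt (by omega)]
  have part3 : ∀ a b : ∀ j, Fin (k j), Query k a b →
      ¬ MoveOn k b (f a b) → ∀ i : Fin n, IsBR u i (b i) b := by
    intro a b hQ hnM i
    by_contra hBR
    apply hnM
    refine ⟨?_, ?_⟩
    · intro hbf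
      have hf := hfQ a b hQ i
      rw [← hbf, if_neg hBR] at hf
      have h := congrArg Fin.val hf
      rw [hsub i (b i)] at h
      have h4 := hk i
      have hb := (b i).is_lt
      split_ifs at h <;> omega
    · intro j
      have hf := hfQ a b hQ j
      have h4 := hk j
      have hbj := (b j).is_lt
      have hfj := (f a b j).is_lt
      have h := congrArg Fin.val hf
      rw [md hbj hfj]
      by_cases hbr : IsBR u j (b j) b
      · rw [if_pos hbr] at h
        split_ifs <;> omega
      · rw [if_neg hbr, hsub j (b j)] at h
        split_ifs at h <;> split_ifs <;> omega
  refine ⟨?_, ?_, ?_⟩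
  · rintro a b ⟨⟨hne, hM⟩, hQ⟩
    have hex : ∃ j, a j ≠ b j := by
      by_contra h
      push_neg at h
      exact hne (funext h)
    obtain ⟨j, hj⟩ := hex
    have hj' : (a j : ℕ) ≠ (b j : ℕ) := fun h => hj (Fin.ext h)
    have h1 := hM j
    have h2 := hQ j
    have h4 := hk j
    have ha := (a j).is_lt
    have hb := (b j).is_lt
    rw [md ha hb] at h1
    rw [md hb ha] at h2
    split_ifs at h1 h2 <;> omega
  · rintro a b (hM | ⟨hnM, hnQ⟩)
    · rw [hfM a b hM]
      intro j
      have h1 := hπ a j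
      have h2 := hM.2 j
      have h4 := hk j
      have ha := (a j).is_lt
      have hb := (b j).is_lt
      have hp := (π a j).is_lt
      rw [md hp ha] at h1
      rw [md ha hb] at h2
      rw [md hp hb]
      split_ifs at h1 h2 ⊢ <;> omega
    · rw [hfR a b hnM hnQ]
      intro j
      have h4 := hk j
      have hb := (b j).is_lt
      rw [md hb hb]
      simp
  · intro a b hQ hnM _ i
    exact part3 a b hQ hnM i
end
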